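/- Let N be an odd prime and let D be a squarefree integer with Jacobi symbol (D/N) = −1. Write N + 1 = 2^s · u with u odd and s ≥ 1. Let w ∈ ℤ[√D] satisfy N(w) ≡ 1 (mod N), w ≢ 1 (mod N) and w ≢ −1 (mod N). Then at least one of the following holds: (a) w^u ≡ 1 (mod N); or (b) there exists an integer r with 0 ≤ r < s such that w^{2^r · u} ≡ −1 (mod N). -/
import Mathlib

open Polynomial

/-- Theorem 1.4: a Miller–Rabin style statement for `N + 1 = 2^s·u` in the
norm-one group of `ℤ[√D]` modulo an odd prime `N`. -/
theorem stmt_3 (N : ℕ) (hNprime : N.Prime) (hNodd : Odd N)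
    (D : ℤ) (hD : Squarefree D) (hJ : jacobiSym D N = -1)
    (s u : ℕ) (hs : 1 ≤ s) (hu : Odd u) (hsu : N + 1 = 2 ^ s * u)
    (w : Zsqrtd D)
    (hnorm : (N : ℤ) ∣ (w.norm - 1))
    (hw1 : ¬ (N : Zsqrtd D) ∣ (w - 1))
    (hw2 : ¬ (N : Zsqrtd D) ∣ (w + 1)) :
    (N : Zsqrtd D) ∣ (w ^ u - 1) ∨
      ∃ r : ℕ, r < s ∧ (N : Zsqrtd D) ∣ (w ^ (2 ^ r * u) + 1) := by
  haveI : Fact N.Prime := ⟨hNprime⟩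
  have hleg : legendreSym N D = -1 := by
    rw [jacobiSym.legendreSym.to_jacobiSym]; exact hJ
  have hns : ¬ IsSquare ((D : ZMod N)) := (legendreSym.eq_neg_one_iff N).mp hleg
  set f : Polynomial (ZMod N) := X ^ 2 - C (D : ZMod N) with hf
  have hirr : Irreducible f :=
    X_pow_sub_C_irreducible_of_prime Nat.prime_two (fun b hb => hns ⟨b, by rw [← hb]; ring⟩)
  haveI : Fact (Irreducible f) := ⟨hirr⟩
  have hofD : AdjoinRoot.of f ((D : ZMod N)) = ((D : ℤ) : AdjoinRoot f) := map_intCast _ D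
  have hρ2 : AdjoinRoot.root f * AdjoinRoot.root f = ((D : ℤ) : AdjoinRoot f) := by
    have h0 : AdjoinRoot.mk f (X ^ 2 - C (D : ZMod N)) = 0 := AdjoinRoot.mk_self
    rw [map_sub, map_pow, AdjoinRoot.mk_X, sub_eq_zero] at h0
    rw [← sq, h0, AdjoinRoot.mk_C]
    exact map_intCast _ D
  set ρ : AdjoinRoot f := AdjoinRoot.root f with hρ
  set φ : Zsqrtd D →+* AdjoinRoot f := Zsqrtd.lift ⟨ρ, hρ2⟩ with hφ
  have hmk : ∀ a b : ZMod N,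
      AdjoinRoot.mk f (C a + C b * X) = AdjoinRoot.of f a + AdjoinRoot.of f b * ρ := by
    intro a b; simp [AdjoinRoot.mk_C, AdjoinRoot.mk_X, hρ]
  have hφz : ∀ z : Zsqrtd D, φ z = (z.re : AdjoinRoot f) + (z.im : AdjoinRoot f) * ρ := by
    intro z; simp [hφ, Zsqrtd.lift_apply_apply]
  -- kernel of φ
  have hker : ∀ z : Zsqrtd D, (φ z = 0 ↔ (N : Zsqrtd D) ∣ z) := by
    intro z
    have hrepr : φ z = AdjoinRoot.mk f (C ((z.re : ZMod N)) + C ((z.im : ZMod N)) * X) := by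
      rw [hmk, hφz, map_intCast, map_intCast]
    have hcast : (N : Zsqrtd D) = ((N : ℤ) : Zsqrtd D) := by push_cast; ring
    rw [hcast, Zsqrtd.intCast_dvd]
    rw [hrepr, AdjoinRoot.mk_eq_zero]
    constructor
    · intro hdvd
      have hne : (C ((z.re : ZMod N)) + C ((z.im : ZMod N)) * X) = 0 := by
        refine Polynomial.eq_zero_of_dvd_of_degree_lt hdvd ?_
        have h2 : f.degree = 2 := by rw [hf]; compute_degree!
        rw [h2]
        calc (C ((z.re : ZMod N)) + C ((z.im : ZMod N)) * X).degree
            ≤ max (C ((z.re : ZMod N))).degree ((C ((z.im : ZMod N))) * X).degree :=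
              Polynomial.degree_add_le _ _
          _ < 2 := by
              apply max_lt
              · exact lt_of_le_of_lt (Polynomial.degree_C_le) (by norm_num)
              · exact lt_of_le_of_lt (Polynomial.degree_mul_le _ _ |>.trans
                  (add_le_add Polynomial.degree_C_le Polynomial.degree_X_le)) (by norm_num)
      have hco : ∀ m : ℤ, ((m : (ZMod N)[X])).coeff 1 = 0 := by
        intro m
        rw [← map_intCast (Polynomial.C (R := ZMod N)) m, Polynomial.coeff_C]
        simp
      have h0 : ((z.re : ZMod N)) = 0 ∧ ((z.im : ZMod N)) = 0 := by
        constructor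
        · have := congrArg (fun q => Polynomial.coeff q 0) hne
          simpa [Polynomial.coeff_C] using this
        · have := congrArg (fun q => Polynomial.coeff q 1) hne
          simpa [hco] using this
      exact ⟨(ZMod.intCast_zmod_eq_zero_iff_dvd _ _).mp h0.1,
             (ZMod.intCast_zmod_eq_zero_iff_dvd _ _).mp h0.2⟩
    · rintro ⟨h1, h2⟩
      have e1 : ((z.re : ZMod N)) = 0 := (ZMod.intCast_zmod_eq_zero_iff_dvd _ _).mpr h1
      have e2 : ((z.im : ZMod N)) = 0 := (ZMod.intCast_zmod_eq_zero_iff_dvd _ _).mpr h2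
      rw [e1, e2]; simp
  haveI : CharP (AdjoinRoot f) N :=
    charP_of_injective_algebraMap (algebraMap (ZMod N) (AdjoinRoot f)).injective N
  set x : AdjoinRoot f := φ w with hx
  obtain ⟨k, hk⟩ := hNodd
  have hk2 : N / 2 = k := by omega
  have hDk : ((D : ℤ) : AdjoinRoot f) ^ k = -1 := by
    have h := legendreSym.eq_pow N D
    rw [hleg, hk2] at h
    have hz : ((D : ZMod N)) ^ k = -1 := by exact_mod_cast h.symm
    have h2 := congrArg (algebraMap (ZMod N) (AdjoinRoot f)) hz
    rw [map_pow, map_neg, map_one] at h2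
    exact hofD ▸ h2
  have hρN : ρ ^ N = -ρ := by
    have h3 : ρ ^ N = (ρ * ρ) ^ k * ρ := by
      rw [← sq, ← pow_mul, ← pow_succ]
      congr 1
    rw [h3, hρ2, hDk]; ring
  have hintpow : ∀ m : ℤ, ((m : AdjoinRoot f)) ^ N = (m : AdjoinRoot f) := by
    intro m
    have h1 : ((m : ZMod N)) ^ N = (m : ZMod N) := ZMod.pow_card _
    have h2 := congrArg (algebraMap (ZMod N) (AdjoinRoot f)) h1
    rw [map_pow] at h2
    simpa using h2
  have hxN : x ^ N = φ (star w) := by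
    rw [hx, hφz w, add_pow_char _ _ N, mul_pow, hintpow, hintpow, hρN, hφz (star w)]
    simp [Zsqrtd.re_star, Zsqrtd.im_star]
  have hx1 : x ^ (N + 1) = 1 := by
    rw [pow_succ, hxN, ← map_mul]
    have hsw : star w * w = ((w.norm : ℤ) : Zsqrtd D) := by
      rw [Zsqrtd.norm_eq_mul_conj, mul_comm]
    rw [hsw, map_intCast]
    obtain ⟨t, ht⟩ := hnorm
    have hn1 : (w.norm : ℤ) = 1 + N * t := by linarith
    rw [hn1]
    push_cast
    rw [CharP.cast_eq_zero (AdjoinRoot f) N]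
    ring
  have hxs : x ^ (2 ^ s * u) = 1 := by rw [← hsu]; exact hx1
  have hxpow : ∀ m : ℕ, φ (w ^ m) = x ^ m := fun m => map_pow φ w m
  by_cases h0 : x ^ u = 1
  · left
    rw [← hker, map_sub, map_one, hxpow, h0, sub_self]
  · right
    have hEx : ∃ r, x ^ (2 ^ r * u) = 1 := ⟨s, hxs⟩
    set r0 := Nat.find hEx with hr0def
    have hr0 : x ^ (2 ^ r0 * u) = 1 := Nat.find_spec hEx
    have hr0ne : r0 ≠ 0 := by
      intro h
      rw [h] at hr0; simp at hr0; exact h0 hr0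
    have hr0le : r0 ≤ s := Nat.find_le hxs
    refine ⟨r0 - 1, by omega, ?_⟩
    set y : AdjoinRoot f := x ^ (2 ^ (r0 - 1) * u) with hy
    have hysq : y ^ 2 = 1 := by
      rw [hy, ← pow_mul]
      have h2 : 2 ^ (r0 - 1) * u * 2 = 2 ^ r0 * u := by
        rw [mul_right_comm, ← pow_succ]
        congr 2; omega
      rw [h2]; exact hr0
    have hy1 : y ≠ 1 := Nat.find_min hEx (by omega)
    have hyneg : y = -1 := by
      have hfac : (y - 1) * (y + 1) = 0 := by linear_combination hysq
      rcases mul_eq_zero.mp hfac with h | h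
      · exact absurd (sub_eq_zero.mp h) hy1
      · exact eq_neg_of_add_eq_zero_left h
    rw [← hker, map_add, map_one, hxpow, ← hy, hyneg, neg_add_cancel]
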